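/- arXiv:1209.3672 — 3 statements merged into one kernel-verified Lean document; each statement's English description precedes it below -/
import Mathlib

section
/- Let f: ℝ → [0,1] be differentiable and let M, M̂ ∈ ℝ^{d1×d2} satisfy ‖M‖_∞ ≤ α and ‖M̂‖_∞ ≤ α. Then d_H²(f(M), f(M̂)) ≥ (inf_{|ξ|≤α} (f'(ξ))²/(8 f(ξ)(1−f(ξ)))) · ‖M − M̂‖_F²/(d1 d2). -/
open Matrix

noncomputable section

/-- Frobenius norm. -/
def frobeniusNorm {d1 d2 : ℕ} (M : Matrix (Fin d1) (Fin d2) ℝ) : ℝ :=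
  Real.sqrt (∑ i, ∑ j, (M i j) ^ 2)

/-- Scalar squared Hellinger distance. -/
def hellingerSq (p q : ℝ) : ℝ :=
  (Real.sqrt p - Real.sqrt q) ^ 2 + (Real.sqrt (1 - p) - Real.sqrt (1 - q)) ^ 2

/-- Averaged squared Hellinger distance between matrices. -/
def hellingerSqM {d1 d2 : ℕ} (P Q : Matrix (Fin d1) (Fin d2) ℝ) : ℝ :=
  (1 / (d1 * d2 : ℝ)) * ∑ i, ∑ j, hellingerSq (P i j) (Q i j)

lemma aux_cos (u : ℝ) (h : |u| ≤ Real.pi/2) : u^2/2 ≤ 2 - 2*Real.cos u := by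
  rw [← Real.cos_abs u, ← sq_abs u]
  set t := |u| with ht
  have ht0 : 0 ≤ t := abs_nonneg u
  rcases eq_or_lt_of_le ht0 with h0 | h0
  · simp [← h0]
  have hpi : Real.pi < 3.15 := Real.pi_lt_d2
  have hs : Real.sin (t/2) ^ 2 = (1 - Real.cos t)/2 := by
    have h1 := Real.cos_sq (t/2)
    have h2 : 2 * (t/2) = t := by ring
    have hsc := Real.sin_sq_add_cos_sq (t/2)
    rw [h2] at h1
    nlinarith
  have hb : t/2 ≤ 0.7875 := by nlinarith
  have hb0 : 0 < t/2 := by linarith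
  have hb2 : (t/2)^2 ≤ 0.62015625 := by nlinarith
  have hc3 : (t/2)^3 ≤ (t/2) * 0.62015625 := by
    calc (t/2)^3 = (t/2) * (t/2)^2 := by ring
    _ ≤ (t/2) * 0.62015625 := by nlinarith
  have hcube : t/2 - (t/2)^3/4 < Real.sin (t/2) :=
    by have := Real.sin_gt_sub_cube hb0; nlinarith [pow_pos hb0 3]
  have hlow : (0:ℝ) ≤ t/2 - (t/2)^3/4 := by nlinarith
  have hsq : (t/2 - (t/2)^3/4)^2 ≤ Real.sin (t/2) ^ 2 := by nlinarith
  have hkey : 2 * (t/2)^2 ≤ 4 * (t/2 - (t/2)^3/4)^2 := by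
    have hexp : (t/2 - (t/2)^3/4)^2 = (t/2)^2 * (1 - (t/2)^2/4)^2 := by ring
    have h84 : (0.844:ℝ) ≤ 1 - (t/2)^2/4 := by nlinarith
    have : (0.844:ℝ)^2 ≤ (1 - (t/2)^2/4)^2 := by nlinarith
    rw [hexp]
    nlinarith [sq_nonneg (t/2)]
  nlinarith

lemma aux_hasDerivAt (f : ℝ → ℝ) (hf : Differentiable ℝ f) (t : ℝ)
    (h0 : 0 < f t) (h1 : f t < 1) :
    HasDerivAt (fun s => Real.arcsin (Real.sqrt (f s)))
      (deriv f t / (2 * Real.sqrt (f t) * Real.sqrt (1 - f t))) t := by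
  have hsq0 : 0 < Real.sqrt (f t) := Real.sqrt_pos.mpr h0
  have hsq1 : Real.sqrt (f t) < 1 := by
    rw [show (1:ℝ) = Real.sqrt 1 by simp]
    exact Real.sqrt_lt_sqrt h0.le h1
  have hd1 : HasDerivAt f (deriv f t) t := (hf t).hasDerivAt
  have hd2 : HasDerivAt Real.sqrt (1/(2 * Real.sqrt (f t))) (f t) :=
    Real.hasDerivAt_sqrt (ne_of_gt h0)
  have hd3 : HasDerivAt (fun s => Real.sqrt (f s))
      (1/(2 * Real.sqrt (f t)) * deriv f t) t := hd2.comp t hd1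
  have hd4 : HasDerivAt Real.arcsin (1 / Real.sqrt (1 - Real.sqrt (f t) ^ 2))
      (Real.sqrt (f t)) :=
    Real.hasDerivAt_arcsin (by linarith) (ne_of_lt hsq1)
  have hd5 := hd4.comp t hd3
  refine HasDerivAt.congr_deriv hd5 ?_
  rw [Real.sq_sqrt h0.le]
  have h1f : 0 < Real.sqrt (1 - f t) := Real.sqrt_pos.mpr (by linarith)
  have hne1 : Real.sqrt (f t) ≠ 0 := ne_of_gt hsq0
  have hne2 : Real.sqrt (1 - f t) ≠ 0 := ne_of_gt h1f
  field_simp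

lemma aux_chord (p q : ℝ) (hp0 : 0 ≤ p) (hp1 : p ≤ 1) (hq0 : 0 ≤ q) (hq1 : q ≤ 1) :
    hellingerSq p q =
      2 - 2 * Real.cos (Real.arcsin (Real.sqrt p) - Real.arcsin (Real.sqrt q)) := by
  have hsp : Real.sqrt p ^ 2 = p := Real.sq_sqrt hp0
  have hsq : Real.sqrt q ^ 2 = q := Real.sq_sqrt hq0
  have hs1p : Real.sqrt (1 - p) ^ 2 = 1 - p := Real.sq_sqrt (by linarith)
  have hs1q : Real.sqrt (1 - q) ^ 2 = 1 - q := Real.sq_sqrt (by linarith)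
  have hsp1 : Real.sqrt p ≤ 1 := by
    rw [show (1:ℝ) = Real.sqrt 1 by simp]; exact Real.sqrt_le_sqrt hp1
  have hsq1 : Real.sqrt q ≤ 1 := by
    rw [show (1:ℝ) = Real.sqrt 1 by simp]; exact Real.sqrt_le_sqrt hq1
  rw [Real.cos_sub, Real.sin_arcsin (by linarith [Real.sqrt_nonneg p]) hsp1,
    Real.sin_arcsin (by linarith [Real.sqrt_nonneg q]) hsq1,
    Real.cos_arcsin, Real.cos_arcsin, hsp, hsq]
  unfold hellingerSq
  linear_combination hsp + hsq + hs1p + hs1q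

lemma hellingerSq_nonneg (p q : ℝ) : 0 ≤ hellingerSq p q := by
  unfold hellingerSq; positivity

lemma aux_point (f : ℝ → ℝ) (hf : Differentiable ℝ f) (hf01 : ∀ x, f x ∈ Set.Icc (0:ℝ) 1)
    (α c : ℝ) (hc0 : 0 ≤ c)
    (hpos : ∀ t ∈ Set.Icc (-α) α, 0 < f t ∧ f t < 1)
    (hc : ∀ t ∈ Set.Icc (-α) α, 2*c ≤ (deriv f t)^2 / (4 * f t * (1 - f t)))
    {x y : ℝ} (hx : x ∈ Set.Icc (-α) α) (hy : y ∈ Set.Icc (-α) α) (hxy : x < y) :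
    c * (x - y)^2 ≤ hellingerSq (f x) (f y) := by
  set θ : ℝ → ℝ := fun s => Real.arcsin (Real.sqrt (f s)) with hθ
  set θ' : ℝ → ℝ := fun s => deriv f s / (2 * Real.sqrt (f s) * Real.sqrt (1 - f s)) with hθ'
  have hsub : Set.Icc x y ⊆ Set.Icc (-α) α := Set.Icc_subset_Icc hx.1 hy.2
  have hcont : ContinuousOn θ (Set.Icc x y) :=
    (Real.continuous_arcsin.comp (Real.continuous_sqrt.comp hf.continuous)).continuousOn
  have hder : ∀ t ∈ Set.Ioo x y, HasDerivAt θ (θ' t) t := by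
    intro t ht
    have ht' := hsub (Set.Ioo_subset_Icc_self ht)
    exact aux_hasDerivAt f hf t (hpos t ht').1 (hpos t ht').2
  obtain ⟨ξ, hξ, hslope⟩ := exists_hasDerivAt_eq_slope θ θ' hxy hcont hder
  have hξ' : ξ ∈ Set.Icc (-α) α := hsub (Set.Ioo_subset_Icc_self hξ)
  have hfξ0 := (hpos ξ hξ').1
  have hfξ1 := (hpos ξ hξ').2
  have hdiff : θ y - θ x = θ' ξ * (y - x) := by
    rw [hslope, div_mul_cancel₀ _ (sub_ne_zero.mpr hxy.ne')]
  have hθ'sq : (θ' ξ)^2 = (deriv f ξ)^2 / (4 * f ξ * (1 - f ξ)) := by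
    rw [hθ']
    have h1 : Real.sqrt (f ξ) ^ 2 = f ξ := Real.sq_sqrt hfξ0.le
    have h2 : Real.sqrt (1 - f ξ) ^ 2 = 1 - f ξ := Real.sq_sqrt (by linarith)
    rw [div_pow]
    congr 1
    nlinarith
  have h2c : 2*c ≤ (θ' ξ)^2 := by rw [hθ'sq]; exact hc ξ hξ'
  have hth2 : 2*c*(y-x)^2 ≤ (θ y - θ x)^2 := by
    rw [hdiff, mul_pow]
    nlinarith [sq_nonneg (y - x)]
  -- angles are in [0, π/2]
  have hang : ∀ s : ℝ, θ s ∈ Set.Icc 0 (Real.pi/2) := by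
    intro s
    exact ⟨Real.arcsin_nonneg.mpr (Real.sqrt_nonneg _), Real.arcsin_le_pi_div_two _⟩
  have habs : |θ x - θ y| ≤ Real.pi/2 := by
    have h1 := hang x; have h2 := hang y
    rw [abs_le]
    constructor <;> [linarith [h1.1, h2.2]; linarith [h1.2, h2.1]]
  have hcos := aux_cos (θ x - θ y) habs
  have hchord : hellingerSq (f x) (f y) = 2 - 2 * Real.cos (θ x - θ y) :=
    aux_chord (f x) (f y) (hf01 x).1 (hf01 x).2 (hf01 y).1 (hf01 y).2
  have hsq_eq : (θ x - θ y)^2 = (θ y - θ x)^2 := by ring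
  rw [hchord]
  have : (x - y)^2 = (y - x)^2 := by ring
  rw [this]
  linarith [hth2, hcos, hsq_eq ▸ hth2]

/-- **Lemma:** for `‖M‖_∞, ‖M̂‖_∞ ≤ α`,
`d_H²(f(M), f(M̂)) ≥ (inf_{|ξ|≤α} f'(ξ)²/(8 f(ξ)(1-f(ξ)))) ‖M - M̂‖_F²/(d1 d2)`. -/
theorem hellinger_lower_bound_frobenius
    (d1 d2 : ℕ) (α : ℝ) (f : ℝ → ℝ) (M Mhat : Matrix (Fin d1) (Fin d2) ℝ)
    (hf : Differentiable ℝ f) (hf01 : ∀ x, f x ∈ Set.Icc (0 : ℝ) 1)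
    (hM : ∀ i j, |M i j| ≤ α) (hMhat : ∀ i j, |Mhat i j| ≤ α) :
    hellingerSqM (M.map f) (Mhat.map f) ≥
      sInf ((fun ξ => (deriv f ξ) ^ 2 / (8 * f ξ * (1 - f ξ))) '' Set.Icc (-α) α) *
        frobeniusNorm (M - Mhat) ^ 2 / (d1 * d2) := by
  set v : ℝ → ℝ := fun ξ => (deriv f ξ) ^ 2 / (8 * f ξ * (1 - f ξ)) with hv
  set S := v '' Set.Icc (-α) α with hS
  set c := sInf S with hcdef
  have hLHS : 0 ≤ hellingerSqM (M.map f) (Mhat.map f) := by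
    unfold hellingerSqM
    apply mul_nonneg (by positivity)
    apply Finset.sum_nonneg; intro i _
    apply Finset.sum_nonneg; intro j _
    exact hellingerSq_nonneg _ _
  have hD : (0:ℝ) ≤ (d1 : ℝ) * (d2 : ℝ) := by positivity
  have hfrob : 0 ≤ frobeniusNorm (M - Mhat) ^ 2 := sq_nonneg _
  by_cases hcle : c ≤ 0
  · have hRHS : c * frobeniusNorm (M - Mhat) ^ 2 / ((d1:ℝ) * d2) ≤ 0 :=
      div_nonpos_of_nonpos_of_nonneg (mul_nonpos_of_nonpos_of_nonneg hcle hfrob) hD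
    linarith
  push_neg at hcle
  -- c > 0. First, S is bounded below by 0.
  have hSnn : ∀ z ∈ S, (0:ℝ) ≤ z := by
    rintro z ⟨t, _, rfl⟩
    have h01 := hf01 t
    apply div_nonneg (sq_nonneg _)
    have : (0:ℝ) ≤ 8 * f t := by linarith [h01.1]
    nlinarith [h01.2]
  have hbdd : BddBelow S := ⟨0, hSnn⟩
  have hc0 : 0 ≤ c := le_csInf (by
    by_contra hemp
    rw [Set.not_nonempty_iff_eq_empty] at hemp
    rw [hcdef, hemp, Real.sInf_empty] at hcle
    exact lt_irrefl 0 hcle) hSnn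
  have hSne : S.Nonempty := by
    by_contra hemp
    rw [Set.not_nonempty_iff_eq_empty] at hemp
    rw [hcdef, hemp, Real.sInf_empty] at hcle
    exact lt_irrefl 0 hcle
  have hpos : ∀ t ∈ Set.Icc (-α) α, 0 < f t ∧ f t < 1 := by
    intro t ht
    by_contra hne
    have h01 := hf01 t
    have hz : v t = 0 := by
      rw [hv]
      simp only
      have : f t = 0 ∨ f t = 1 := by
        rcases not_and_or.mp hne with h | h
        · left; linarith [h01.1, not_lt.mp h]
        · right; linarith [h01.2, not_lt.mp h]
      rcases this with h | h <;> simp [h]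
    have : c ≤ 0 := hz ▸ csInf_le hbdd ⟨t, ht, hz ▸ rfl⟩
    linarith
  have hc2 : ∀ t ∈ Set.Icc (-α) α, 2*c ≤ (deriv f t)^2 / (4 * f t * (1 - f t)) := by
    intro t ht
    have hle : c ≤ v t := csInf_le hbdd ⟨t, ht, rfl⟩
    have h0 := (hpos t ht).1
    have h1 := (hpos t ht).2
    have hne1 : f t ≠ 0 := ne_of_gt h0
    have hne2 : (1 - f t) ≠ 0 := ne_of_gt (by linarith)
    have heq : (deriv f t)^2 / (4 * f t * (1 - f t)) = 2 * v t := by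
      rw [hv]
      simp only
      field_simp
      ring
    rw [heq]
    linarith
  -- pointwise bound for all pairs
  have hpoint : ∀ (x y : ℝ), x ∈ Set.Icc (-α) α → y ∈ Set.Icc (-α) α →
      c * (x - y)^2 ≤ hellingerSq (f x) (f y) := by
    intro x y hx hy
    rcases lt_trichotomy x y with h | h | h
    · exact aux_point f hf hf01 α c hc0 hpos hc2 hx hy h
    · subst h; simp [hellingerSq]
    · have := aux_point f hf hf01 α c hc0 hpos hc2 hy hx h
      have hsymm : hellingerSq (f y) (f x) = hellingerSq (f x) (f y) := by
        unfold hellingerSq; ring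
      have hsq : (y - x)^2 = (x - y)^2 := by ring
      rw [hsymm, hsq] at this
      exact this
  -- summation
  have hmem : ∀ (z : ℝ), |z| ≤ α → z ∈ Set.Icc (-α) α := fun z hz => abs_le.mp hz
  have hsum : c * (∑ i, ∑ j, ((M - Mhat) i j)^2) ≤
      ∑ i, ∑ j, hellingerSq ((M.map f) i j) ((Mhat.map f) i j) := by
    rw [Finset.mul_sum]
    apply Finset.sum_le_sum; intro i _
    rw [Finset.mul_sum]
    apply Finset.sum_le_sum; intro j _
    have := hpoint (M i j) (Mhat i j) (hmem _ (hM i j)) (hmem _ (hMhat i j))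
    simpa [Matrix.sub_apply, Matrix.map_apply] using this
  have hfrobsq : frobeniusNorm (M - Mhat) ^ 2 = ∑ i, ∑ j, ((M - Mhat) i j)^2 := by
    unfold frobeniusNorm
    rw [Real.sq_sqrt]
    apply Finset.sum_nonneg; intro i _
    apply Finset.sum_nonneg; intro j _
    exact sq_nonneg _
  rw [ge_iff_le]
  unfold hellingerSqM
  rw [hfrobsq]
  rw [div_eq_mul_inv, mul_comm (c * _) _, ← one_div]
  exact mul_le_mul_of_nonneg_left hsum (by positivity)

end
end

section
/- Let K = {M ∈ ℝ^{d1×d2} : ‖M‖_* ≤ α√(r d1 d2), ‖M‖_∞ ≤ α}. Let γ ≤ 1 be such that r/γ² is an integer and r/γ² ≤ d1. Then there exists a finite set 𝒳 ⊂ K with |𝒳| ≥ exp(r d2/(16 γ²)) such that: (1) every entry of every X ∈ 𝒳 satisfies |X_{i,j}| = αγ; and (2) for all distinct X, X' ∈ 𝒳, ‖X − X'‖_F² > α²γ² d1 d2 / 2. -/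
open Matrix

noncomputable section

/-- Nuclear (Schatten-1) norm: sum of singular values. -/
def nuclearNorm {d1 d2 : ℕ} (M : Matrix (Fin d1) (Fin d2) ℝ) : ℝ :=
  ∑ i, Real.sqrt ((show (Mᵀ * M).IsHermitian by
    simpa [Matrix.conjTranspose_eq_transpose_of_trivial] using Matrix.isHermitian_conjTranspose_mul_self M).eigenvalues i)

/-- sign matrix built from a boolean pattern and a row-assignment map -/
def packMat {d1 d2 k : ℕ} (α γ : ℝ) (φ : Fin d1 → Fin k)
    (c : Fin k × Fin d2 → Bool) : Matrix (Fin d1) (Fin d2) ℝ :=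
  Matrix.of fun i j => α * γ * (if c (φ i, j) then 1 else -1)

section Aux

lemma ball_card_le (ι : Type*) [Fintype ι] [DecidableEq ι] (c : ι → Bool) (t : ℕ) :
    (({y : ι → Bool | hammingDist c y ≤ t} : Finset _).card : ℝ)
      ≤ (4/3) ^ (Fintype.card ι) * 3 ^ t := by
  classical
  have hpow : ∀ y : ι → Bool, ((1:ℝ)/3) ^ (hammingDist c y)
      = ∏ i, (if c i ≠ y i then (1:ℝ)/3 else 1) := by
    intro y
    rw [hammingDist, ← Finset.prod_filter, Finset.prod_const]
  have key : ∑ y : ι → Bool, ((1:ℝ)/3) ^ (hammingDist c y) = (4/3) ^ (Fintype.card ι) := by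
    simp_rw [hpow]
    rw [← Fintype.piFinset_univ,
      ← Finset.prod_univ_sum (t := fun _ : ι => (Finset.univ : Finset Bool))
        (f := fun i b => if c i ≠ b then (1:ℝ)/3 else 1)]
    have h43 : ∀ i : ι, (∑ j : Bool, if c i ≠ j then (1:ℝ)/3 else 1) = 4/3 := by
      intro i; rw [Fintype.sum_bool]; cases h : c i <;> norm_num [h]
    rw [Finset.prod_congr rfl fun i _ => h43 i, Finset.prod_const, Finset.card_univ]
  calc (({y : ι → Bool | hammingDist c y ≤ t} : Finset _).card : ℝ)
      = ∑ y ∈ ({y : ι → Bool | hammingDist c y ≤ t} : Finset _), (1:ℝ) := by simp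
    _ ≤ ∑ y ∈ ({y : ι → Bool | hammingDist c y ≤ t} : Finset _),
        3 ^ t * ((1:ℝ)/3) ^ (hammingDist c y) := by
        refine Finset.sum_le_sum fun y hy => ?_
        simp only [Finset.mem_filter] at hy
        have hd : hammingDist c y ≤ t := by simpa using hy
        rw [div_pow, one_pow, mul_one_div, le_div_iff₀ (by positivity), one_mul]
        exact_mod_cast pow_le_pow_right₀ (by norm_num) hd
    _ ≤ ∑ y : ι → Bool, 3 ^ t * ((1:ℝ)/3) ^ (hammingDist c y) := by
        refine Finset.sum_le_sum_of_subset_of_nonneg (Finset.subset_univ _)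
          fun y _ _ => by positivity
    _ = (4/3) ^ (Fintype.card ι) * 3 ^ t := by
        rw [← Finset.mul_sum, key, mul_comm]

lemma exists_maximal_code (ι : Type*) [Fintype ι] [DecidableEq ι] (D : ℕ) (hD : 0 < D) :
    ∃ C : Finset (ι → Bool),
      (∀ c ∈ C, ∀ c' ∈ C, c ≠ c' → D ≤ hammingDist c c') ∧
      (∀ y : ι → Bool, ∃ c ∈ C, hammingDist c y < D) := by
  classical
  let P : Finset (ι → Bool) → Prop := fun C => ∀ c ∈ C, ∀ c' ∈ C, c ≠ c' → D ≤ hammingDist c c'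
  have hS : ((Finset.univ : Finset (Finset (ι → Bool))).filter P).Nonempty :=
    ⟨∅, by simp [P]⟩
  obtain ⟨C, hCmem, hCmax⟩ := Finset.exists_max_image _ Finset.card hS
  rw [Finset.mem_filter] at hCmem
  refine ⟨C, hCmem.2, fun y => ?_⟩
  by_contra hy
  push_neg at hy
  have hyC : y ∉ C := fun h => by
    have := hy y h
    simp [hammingDist_self] at this
    omega
  have hins : P (insert y C) := by
    intro c hc c' hc' hne
    rcases Finset.mem_insert.mp hc with hcy | hc2 <;>
      rcases Finset.mem_insert.mp hc' with hc'y | hc'2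
    · exact absurd (hcy.trans hc'y.symm) hne
    · rw [hcy, hammingDist_comm]; exact hy c' hc'2
    · rw [hc'y]; exact hy c hc2
    · exact hCmem.2 c hc2 c' hc'2 hne
  have hle := hCmax (insert y C) (Finset.mem_filter.mpr ⟨Finset.mem_univ _, hins⟩)
  rw [Finset.card_insert_of_notMem hyC] at hle
  omega

lemma exists_code (ι : Type*) [Fintype ι] [DecidableEq ι] (n : ℕ) (hn : Fintype.card ι = n)
    (hn1 : 1 ≤ n) :
    ∃ C : Finset (ι → Bool),
      (∀ c ∈ C, ∀ c' ∈ C, c ≠ c' → (n+3)/4 ≤ hammingDist c c') ∧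
      Real.exp (n / 16) ≤ C.card := by
  classical
  set D := (n+3)/4 with hDdef
  have hD : 0 < D := by omega
  obtain ⟨C, hC, hmax⟩ := exists_maximal_code ι D hD
  refine ⟨C, hC, ?_⟩
  have h1 : Fintype.card (ι → Bool)
      ≤ ∑ c ∈ C, (({y : ι → Bool | hammingDist c y ≤ D - 1} : Finset _)).card := by
    calc Fintype.card (ι → Bool) = (Finset.univ : Finset (ι → Bool)).card :=
          Finset.card_univ.symm
      _ ≤ (C.biUnion fun c => ({y : ι → Bool | hammingDist c y ≤ D - 1} : Finset _)).card := by
          refine Finset.card_le_card fun y _ => ?_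
          obtain ⟨c, hc, hlt⟩ := hmax y
          exact Finset.mem_biUnion.mpr ⟨c, hc, by simp only [Finset.mem_filter,
            Finset.mem_univ, true_and, Set.mem_setOf_eq, Finset.mem_coe]; omega⟩
      _ ≤ _ := Finset.card_biUnion_le
  have hcard : (2:ℝ)^n ≤ C.card * ((4/3)^n * 3^(D-1)) := by
    have h2 : ((Fintype.card (ι → Bool) : ℕ) : ℝ)
        ≤ ∑ c ∈ C, ((4:ℝ)/3)^n * 3^(D-1) := by
      calc ((Fintype.card (ι → Bool) : ℕ) : ℝ)
          ≤ ((∑ c ∈ C, (({y : ι → Bool | hammingDist c y ≤ D - 1} : Finset _)).card : ℕ) : ℝ) :=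
            by exact_mod_cast h1
        _ = ∑ c ∈ C, ((({y : ι → Bool | hammingDist c y ≤ D - 1} : Finset _)).card : ℝ) := by
            push_cast; ring
        _ ≤ _ := Finset.sum_le_sum fun c _ => by
            simpa [hn] using ball_card_le ι c (D-1)
    rw [Finset.sum_const, nsmul_eq_mul] at h2
    rw [Fintype.card_fun, Fintype.card_bool, hn] at h2
    exact_mod_cast h2
  have ht : ((D - 1 : ℕ) : ℝ) ≤ (n:ℝ) / 4 := by
    have h4 : 4 * (D - 1) ≤ n := by omega
    have h5 : (4:ℝ) * ((D-1:ℕ):ℝ) ≤ (n:ℝ) := by exact_mod_cast h4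
    linarith
  have hlog : 1 + 16 * Real.log 2 ≤ 12 * Real.log 3 := by
    have h1 : Real.exp 1 ≤ (531441:ℝ)/65536 := by
      have := Real.exp_one_lt_d9
      norm_num at this ⊢
      linarith
    have h2 : (1:ℝ) ≤ Real.log ((531441:ℝ)/65536) := by
      calc (1:ℝ) = Real.log (Real.exp 1) := (Real.log_exp 1).symm
        _ ≤ _ := Real.log_le_log (Real.exp_pos 1) h1
    rw [Real.log_div (by norm_num) (by norm_num),
      show (531441:ℝ) = 3^12 by norm_num, show (65536:ℝ) = 2^16 by norm_num,
      Real.log_pow, Real.log_pow] at h2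
    push_cast at h2
    linarith
  have hl43 : Real.log (4/3) = 2*Real.log 2 - Real.log 3 := by
    rw [Real.log_div (by norm_num) (by norm_num), show (4:ℝ) = 2^2 by norm_num, Real.log_pow]
    push_cast; ring
  have hkey : Real.exp ((n:ℝ)/16) * ((4/3)^n * 3^(D-1)) ≤ (2:ℝ)^n := by
    rw [show ((4:ℝ)/3)^n = Real.exp ((n:ℝ) * Real.log (4/3)) by
        rw [Real.exp_nat_mul, Real.exp_log (by norm_num)],
      show ((3:ℝ))^(D-1) = Real.exp (((D-1:ℕ):ℝ) * Real.log 3) by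
        rw [Real.exp_nat_mul, Real.exp_log (by norm_num)],
      show ((2:ℝ))^n = Real.exp ((n:ℝ) * Real.log 2) by
        rw [Real.exp_nat_mul, Real.exp_log (by norm_num)],
      ← Real.exp_add, ← Real.exp_add, Real.exp_le_exp]
    have hn0 : (0:ℝ) ≤ (n:ℝ) := by positivity
    have hlog3 : (0:ℝ) ≤ Real.log 3 := Real.log_nonneg (by norm_num)
    have hp1 : ((D-1:ℕ):ℝ) * Real.log 3 ≤ ((n:ℝ)/4) * Real.log 3 :=
      mul_le_mul_of_nonneg_right ht hlog3
    have hp2 : (n:ℝ) * (1 + 16*Real.log 2) ≤ (n:ℝ) * (12 * Real.log 3) :=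
      mul_le_mul_of_nonneg_left hlog hn0
    rw [hl43]
    nlinarith [hp1, hp2]
  have hB : (0:ℝ) < (4/3)^n * 3^(D-1) := by positivity
  have hfin : Real.exp ((n:ℝ)/16) * ((4/3)^n * 3^(D-1)) ≤ C.card * ((4/3)^n * 3^(D-1)) :=
    le_trans hkey hcard
  exact le_of_mul_le_mul_right hfin hB

lemma sum_eigs_eq_trace {d1 d2 : ℕ} (M : Matrix (Fin d1) (Fin d2) ℝ) :
    ∑ i, (Matrix.isHermitian_conjTranspose_mul_self M).eigenvalues i = (Mᴴ * M).trace := by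
  set hH := Matrix.isHermitian_conjTranspose_mul_self M
  have hst := hH.spectral_theorem
  have h1 : (Mᴴ * M).trace
      = ((hH.eigenvectorUnitary : Matrix (Fin d2) (Fin d2) ℝ)
          * (Matrix.diagonal (RCLike.ofReal ∘ hH.eigenvalues))
          * (star (hH.eigenvectorUnitary : Matrix (Fin d2) (Fin d2) ℝ))).trace := by
    conv_lhs => rw [hst, Unitary.conjStarAlgAut_apply]
  rw [h1, Matrix.trace_mul_comm, ← Matrix.mul_assoc]
  have hu : (star (hH.eigenvectorUnitary : Matrix (Fin d2) (Fin d2) ℝ))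
      * (hH.eigenvectorUnitary : Matrix (Fin d2) (Fin d2) ℝ) = 1 := by
    exact Unitary.coe_star_mul_self hH.eigenvectorUnitary
  rw [hu, Matrix.one_mul, Matrix.trace_diagonal]
  simp [RCLike.ofReal]

lemma trace_eq_frob {d1 d2 : ℕ} (M : Matrix (Fin d1) (Fin d2) ℝ) :
    (Mᴴ * M).trace = ∑ i, ∑ j, M i j ^ 2 := by
  rw [Matrix.trace]
  simp only [Matrix.diag_apply, Matrix.mul_apply, Matrix.conjTranspose_apply, star_trivial]
  rw [Finset.sum_comm]
  refine Finset.sum_congr rfl fun i _ => Finset.sum_congr rfl fun j _ => by ring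

lemma nuclearNorm_le_of_rank {d1 d2 : ℕ} (M : Matrix (Fin d1) (Fin d2) ℝ) (k : ℕ)
    (hk : M.rank ≤ k) :
    nuclearNorm M ≤ Real.sqrt (k * ∑ i, ∑ j, M i j ^ 2) := by
  classical
  set hH := Matrix.isHermitian_conjTranspose_mul_self M with hHdef
  set lam := hH.eigenvalues with hlam
  have hnn : ∀ i, 0 ≤ lam i := fun i => Matrix.eigenvalues_conjTranspose_mul_self_nonneg M i
  set S : Finset (Fin d2) := Finset.univ.filter (fun i => lam i ≠ 0) with hS
  have hSle : S.card ≤ k := by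
    have h1 : (Mᴴ * M).rank = Fintype.card {i // lam i ≠ 0} := hH.rank_eq_card_non_zero_eigs
    have h2 : Fintype.card {i // lam i ≠ 0} = S.card := Fintype.card_subtype _
    have h3 : (Mᴴ * M).rank = M.rank := by
      have hMt : Mᴴ = Mᵀ := by
        ext i j; simp [Matrix.conjTranspose_apply, star_trivial]
      rw [hMt, Matrix.rank_transpose_mul_self]
    omega
  have hsum : nuclearNorm M = ∑ i ∈ S, Real.sqrt (lam i) := by
    rw [nuclearNorm]
    refine (Finset.sum_filter_of_ne fun i _ h => ?_).symm
    intro h0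
    have h0' : (show (Mᵀ * M).IsHermitian by
      simpa [Matrix.conjTranspose_eq_transpose_of_trivial] using Matrix.isHermitian_conjTranspose_mul_self M).eigenvalues i = 0 := h0
    rw [h0', Real.sqrt_zero] at h
    exact h rfl
  have hCS : (∑ i ∈ S, Real.sqrt (lam i)) ^ 2 ≤ S.card * ∑ i ∈ S, lam i := by
    have h1 := sq_sum_le_card_mul_sum_sq (s := S) (f := fun i => Real.sqrt (lam i))
    have h2 : ∑ i ∈ S, Real.sqrt (lam i) ^ 2 = ∑ i ∈ S, lam i :=
      Finset.sum_congr rfl fun i _ => Real.sq_sqrt (hnn i)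
    calc (∑ i ∈ S, Real.sqrt (lam i)) ^ 2 ≤ S.card * ∑ i ∈ S, Real.sqrt (lam i) ^ 2 := h1
      _ = S.card * ∑ i ∈ S, lam i := by rw [h2]
  have hsub : ∑ i ∈ S, lam i ≤ ∑ i, lam i :=
    Finset.sum_le_sum_of_subset_of_nonneg (Finset.subset_univ _) fun i _ _ => hnn i
  have htr : ∑ i, lam i = ∑ i, ∑ j, M i j ^ 2 := by
    rw [hlam, hHdef, sum_eigs_eq_trace, trace_eq_frob]
  have hfin : (∑ i ∈ S, Real.sqrt (lam i)) ^ 2 ≤ k * ∑ i, ∑ j, M i j ^ 2 := by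
    calc (∑ i ∈ S, Real.sqrt (lam i)) ^ 2 ≤ S.card * ∑ i ∈ S, lam i := hCS
      _ ≤ k * ∑ i, ∑ j, M i j ^ 2 := by
          rw [← htr]
          have hnonneg : 0 ≤ ∑ i, lam i := Finset.sum_nonneg fun i _ => hnn i
          have hck : (S.card : ℝ) ≤ k := by exact_mod_cast hSle
          have h0 : (0:ℝ) ≤ ∑ i ∈ S, lam i := Finset.sum_nonneg fun i _ => hnn i
          nlinarith
  rw [hsum]
  have hge : 0 ≤ ∑ i ∈ S, Real.sqrt (lam i) :=
    Finset.sum_nonneg fun i _ => Real.sqrt_nonneg _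
  rw [show (∑ i ∈ S, Real.sqrt (lam i)) = Real.sqrt ((∑ i ∈ S, Real.sqrt (lam i))^2) from
    (Real.sqrt_sq hge).symm]
  exact Real.sqrt_le_sqrt hfin

lemma replicate_sum_le {d1 k m d2 : ℕ} (φ : Fin d1 → Fin k) (ξ : Fin k × Fin m → Fin d1)
    (hφξ : ∀ p, φ (ξ p) = p.1) (hξinj : Function.Injective ξ)
    (t : Fin k → Fin d2 → ℝ) (ht : ∀ l j, 0 ≤ t l j) :
    (m:ℝ) * ∑ l, ∑ j, t l j ≤ ∑ i, ∑ j, t (φ i) j := by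
  calc (m:ℝ) * ∑ l, ∑ j, t l j
      = ∑ q : Fin k × Fin m, ∑ j, t q.1 j := by
        rw [Fintype.sum_prod_type]
        simp only [Finset.sum_const, Finset.card_univ, Fintype.card_fin, nsmul_eq_mul,
          Finset.mul_sum]
    _ = ∑ q : Fin k × Fin m, ∑ j, t (φ (ξ q)) j := by
        refine Finset.sum_congr rfl fun q _ => by rw [hφξ]
    _ = ∑ i ∈ Finset.univ.image ξ, ∑ j, t (φ i) j :=
        (Finset.sum_image (f := fun i => ∑ j, t (φ i) j) (g := ξ) (s := Finset.univ)
          fun x _ y _ h => hξinj h).symm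
    _ ≤ ∑ i, ∑ j, t (φ i) j :=
        Finset.sum_le_sum_of_subset_of_nonneg (Finset.subset_univ _)
          (fun i _ _ => Finset.sum_nonneg fun j _ => ht _ _)

end Aux

/-- **Lemma (packing set).**  If `γ ≤ 1`, `r/γ²` is an integer and `r/γ² ≤ d1`, there is a
set `𝒳 ⊆ K = {X : ‖X‖_* ≤ α √(r d1 d2), ‖X‖_∞ ≤ α}` of cardinality at least
`exp(r d2/(16 γ²))` whose elements have all entries of absolute value `αγ` and are pairwise
at squared Frobenius distance more than `α²γ² d1 d2/2`. -/
theorem packing_set_exists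
    (d1 d2 r : ℕ) (α γ : ℝ)
    (hd1 : 0 < d1) (hd2 : 0 < d2) (hr : 1 ≤ r) (hα : 0 < α) (hγ : 0 < γ) (hγ1 : γ ≤ 1)
    (hint : ∃ k : ℕ, (r : ℝ) / γ ^ 2 = k) (hle : (r : ℝ) / γ ^ 2 ≤ d1) :
    ∃ 𝒳 : Finset (Matrix (Fin d1) (Fin d2) ℝ),
      (∀ X ∈ 𝒳, nuclearNorm X ≤ α * Real.sqrt (r * d1 * d2) ∧ ∀ i j, |X i j| ≤ α) ∧
      Real.exp (r * d2 / (16 * γ ^ 2)) ≤ 𝒳.card ∧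
      (∀ X ∈ 𝒳, ∀ i j, |X i j| = α * γ) ∧
      (∀ X ∈ 𝒳, ∀ X' ∈ 𝒳, X ≠ X' →
        frobeniusNorm (X - X') ^ 2 > α ^ 2 * γ ^ 2 * d1 * d2 / 2) := by
  classical
  obtain ⟨k, hk⟩ := hint
  have hγ2 : (0:ℝ) < γ^2 := by positivity
  have hkr : (r:ℝ) = k * γ^2 := by
    field_simp at hk
    linarith
  have hγ21 : γ^2 ≤ 1 := by nlinarith
  have hk1 : 1 ≤ k := by
    have hr1 : (1:ℝ) ≤ r := by exact_mod_cast hr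
    have : (1:ℝ) ≤ k := by nlinarith
    exact_mod_cast this
  have hk0 : 0 < k := hk1
  have hkd1 : k ≤ d1 := by
    have : (k:ℝ) ≤ d1 := hk ▸ hle
    exact_mod_cast this
  set m := d1 / k with hmdef
  have hm1 : 1 ≤ m := (Nat.one_le_div_iff hk0).mpr hkd1
  have hkm : k * m ≤ d1 := by
    rw [hmdef, Nat.mul_comm]
    exact Nat.div_mul_le_self d1 k
  have h4 : d1 < k * m + k := by
    calc d1 = k * m + d1 % k := by rw [hmdef]; exact (Nat.div_add_mod d1 k).symm
    _ < k * m + k := Nat.add_lt_add_left (Nat.mod_lt d1 hk0) _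
  have h2km : d1 < 2 * (k * m) := by
    have h3 : k ≤ k * m := Nat.le_mul_of_pos_right k hm1
    calc d1 < k * m + k := h4
    _ ≤ k * m + k * m := Nat.add_le_add_left h3 _
    _ = 2 * (k * m) := by ring
  have hn1 : 1 ≤ k * d2 := Nat.mul_pos hk0 hd2
  obtain ⟨C, hC, hCcard⟩ := exists_code (Fin k × Fin d2) (k*d2) (by simp) hn1
  set D := (k*d2+3)/4 with hDdef
  have hD4 : k*d2 ≤ 4*D := by omega
  -- row assignment
  have hφlt : ∀ i : Fin d1, min (i.1 / m) (k-1) < k :=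
    fun i => lt_of_le_of_lt (Nat.min_le_right _ _) (by omega)
  set φ : Fin d1 → Fin k := fun i => ⟨min (i.1 / m) (k-1), hφlt i⟩ with hφdef
  -- section map
  have hξlt : ∀ p : Fin k × Fin m, p.1.1 * m + p.2.1 < d1 := by
    intro p
    calc p.1.1*m + p.2.1 < p.1.1*m + m := Nat.add_lt_add_left p.2.2 _
    _ = (p.1.1+1)*m := by ring
    _ ≤ k*m := Nat.mul_le_mul_right m p.1.2
    _ ≤ d1 := hkm
  set ξ : Fin k × Fin m → Fin d1 := fun p => ⟨p.1.1 * m + p.2.1, hξlt p⟩ with hξdef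
  have hφξ : ∀ p : Fin k × Fin m, φ (ξ p) = p.1 := by
    rintro ⟨l, a⟩
    apply Fin.ext
    show min ((l.1*m + a.1)/m) (k-1) = l.1
    have hm0 : 0 < m := hm1
    rw [show l.1*m + a.1 = a.1 + l.1*m by ring, Nat.add_mul_div_right _ _ hm0,
      Nat.div_eq_of_lt a.2, Nat.zero_add]
    exact Nat.min_eq_left (by omega)
  have hξinj : Function.Injective ξ := by
    intro p q h
    have h1 : φ (ξ p) = φ (ξ q) := by rw [h]
    rw [hφξ, hφξ] at h1
    have hv : p.1.1 = q.1.1 := congrArg Fin.val h1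
    have h2 : p.1.1*m + p.2.1 = q.1.1*m + q.2.1 := congrArg Fin.val h
    rw [hv] at h2
    exact Prod.ext h1 (Fin.ext (Nat.add_left_cancel h2))
  have hαγ : (0:ℝ) < α * γ := by positivity
  -- basic entry facts
  have habs : ∀ (c : Fin k × Fin d2 → Bool) i j, |packMat α γ φ c i j| = α * γ := by
    intro c i j
    cases h : c (φ i, j) <;> simp [packMat, h, abs_of_pos hαγ]
  have hsq : ∀ (c : Fin k × Fin d2 → Bool) i j, (packMat α γ φ c i j)^2 = (α*γ)^2 := by
    intro c i j
    cases h : c (φ i, j) <;> simp [packMat, h] <;> ring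
  have hfrobsum : ∀ (c : Fin k × Fin d2 → Bool),
      ∑ i, ∑ j, (packMat α γ φ c i j)^2 = (d1:ℝ) * d2 * (α*γ)^2 := by
    intro c
    simp only [hsq]
    rw [Finset.sum_const, Finset.sum_const, Finset.card_univ, Finset.card_univ,
      Fintype.card_fin, Fintype.card_fin, nsmul_eq_mul, nsmul_eq_mul]
    ring
  -- rank bound
  have hrank : ∀ (c : Fin k × Fin d2 → Bool), (packMat α γ φ c).rank ≤ k := by
    intro c
    have hEB : packMat α γ φ c
        = (Matrix.of fun i l => if φ i = l then (1:ℝ) else 0)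
          * (Matrix.of fun l j => α*γ*(if c (l,j) then (1:ℝ) else -1)) := by
      ext i j
      rw [Matrix.mul_apply, Finset.sum_eq_single (φ i)]
      · simp [packMat]
      · intro b _ hb
        simp [Ne.symm hb]
      · intro h; exact absurd (Finset.mem_univ _) h
    rw [hEB]
    calc ((Matrix.of fun i l => if φ i = l then (1:ℝ) else 0)
          * (Matrix.of fun l j => α*γ*(if c (l,j) then (1:ℝ) else -1))).rank
        ≤ (Matrix.of fun l j => α*γ*(if c (l,j) then (1:ℝ) else -1)).rank :=
          Matrix.rank_mul_le_right _ _
      _ ≤ Fintype.card (Fin k) := Matrix.rank_le_card_height _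
      _ = k := Fintype.card_fin k
  -- injectivity
  have hXinj : Function.Injective (fun c : Fin k × Fin d2 → Bool => packMat α γ φ c) := by
    intro c c' h
    funext p
    obtain ⟨l, j⟩ := p
    have h' : packMat α γ φ c = packMat α γ φ c' := h
    have hij : packMat α γ φ c (ξ (l, ⟨0, hm1⟩)) j = packMat α γ φ c' (ξ (l, ⟨0, hm1⟩)) j := by
      rw [h']
    simp only [packMat, Matrix.of_apply, hφξ] at hij
    have heq : (if c (l,j) then (1:ℝ) else -1) = (if c' (l,j) then 1 else -1) :=
      mul_left_cancel₀ (ne_of_gt hαγ) hij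
    cases h1 : c (l,j) <;> cases h2 : c' (l,j) <;> rw [h1, h2] at heq <;>
      simp only [if_true, if_false, Bool.false_eq_true, Bool.true_eq_false, ite_true,
        ite_false] at heq ⊢ <;> first | rfl | norm_num at heq
  refine ⟨C.image (fun c => packMat α γ φ c), ?_, ?_, ?_, ?_⟩
  · rintro X hX
    obtain ⟨c, hc, rfl⟩ := Finset.mem_image.mp hX
    constructor
    · calc nuclearNorm (packMat α γ φ c)
          ≤ Real.sqrt (k * ∑ i, ∑ j, (packMat α γ φ c i j)^2) :=
            nuclearNorm_le_of_rank _ k (hrank c)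
        _ = α * Real.sqrt (r * d1 * d2) := by
            rw [hfrobsum c, show (k:ℝ) * ((d1:ℝ) * d2 * (α*γ)^2) = α^2 * ((r:ℝ)*d1*d2) by
              rw [hkr]; ring, Real.sqrt_mul (sq_nonneg α), Real.sqrt_sq hα.le]
    · intro i j
      rw [habs c i j]
      nlinarith
  · rw [Finset.card_image_of_injOn (Function.Injective.injOn hXinj)]
    have harg : (r:ℝ) * d2 / (16 * γ^2) = ((k*d2 : ℕ):ℝ)/16 := by
      push_cast
      rw [hkr]
      field_simp
    rw [harg]
    exact hCcard
  · rintro X hX i j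
    obtain ⟨c, hc, rfl⟩ := Finset.mem_image.mp hX
    exact habs c i j
  · rintro X hX X' hX' hne
    obtain ⟨c, hc, rfl⟩ := Finset.mem_image.mp hX
    obtain ⟨c', hc', rfl⟩ := Finset.mem_image.mp hX'
    have hcc : c ≠ c' := fun h => hne (by rw [h])
    have hdH := hC c hc c' hc' hcc
    -- entrywise squared difference
    have hsub : ∀ i j, ((packMat α γ φ c - packMat α γ φ c') i j)^2
        = (if c (φ i,j) = c' (φ i,j) then (0:ℝ) else 4*(α*γ)^2) := by
      intro i j
      rcases h1 : c (φ i,j) <;> rcases h2 : c' (φ i,j) <;>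
        simp [packMat, h1, h2, Matrix.sub_apply] <;> ring
    have hfrob2 : frobeniusNorm (packMat α γ φ c - packMat α γ φ c') ^ 2
        = ∑ i, ∑ j, (if c (φ i,j) = c' (φ i,j) then (0:ℝ) else 4*(α*γ)^2) := by
      rw [frobeniusNorm, Real.sq_sqrt]
      · exact Finset.sum_congr rfl fun i _ => Finset.sum_congr rfl fun j _ => hsub i j
      · exact Finset.sum_nonneg fun i _ => Finset.sum_nonneg fun j _ => sq_nonneg _
    -- hamming sum
    have hsumt : ∑ p : Fin k × Fin d2, (if c p = c' p then (0:ℝ) else 4*(α*γ)^2)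
        = (hammingDist c c' : ℝ) * (4*(α*γ)^2) := by
      rw [Finset.sum_ite, Finset.sum_const_zero, Finset.sum_const, zero_add, nsmul_eq_mul]
      simp only [hammingDist, ne_eq]
    have hsum2 : ∑ l, ∑ j, (if c (l,j) = c' (l,j) then (0:ℝ) else 4*(α*γ)^2)
        = (hammingDist c c' : ℝ) * (4*(α*γ)^2) := by
      rw [← hsumt, Fintype.sum_prod_type]
    -- replication lower bound
    have hkey : (m:ℝ) * ((hammingDist c c' : ℝ) * (4*(α*γ)^2))
        ≤ ∑ i, ∑ j, (if c (φ i,j) = c' (φ i,j) then (0:ℝ) else 4*(α*γ)^2) := by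
      rw [← hsum2]
      exact replicate_sum_le φ ξ hφξ hξinj
        (fun l j => if c (l,j) = c' (l,j) then (0:ℝ) else 4*(α*γ)^2)
        (fun l j => by
          show (0:ℝ) ≤ if c (l,j) = c' (l,j) then (0:ℝ) else 4*(α*γ)^2
          split <;> positivity)
    -- final numeric chain
    have hdHr : ((D:ℕ):ℝ) ≤ (hammingDist c c' : ℝ) := by exact_mod_cast hdH
    have hD4r : (k:ℝ)*(d2:ℝ) ≤ 4*((D:ℕ):ℝ) := by exact_mod_cast hD4
    have h2kmr : (d1:ℝ) < 2*((k:ℝ)*(m:ℝ)) := by exact_mod_cast h2km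
    have hd2r : (0:ℝ) < d2 := by exact_mod_cast hd2
    have hmr : (0:ℝ) < m := by exact_mod_cast hm1
    have hA : (0:ℝ) < α^2*γ^2 := by positivity
    have hchain1 : α^2*γ^2*d1*d2/2 < α^2*γ^2*((k:ℝ)*m)*d2 := by
      calc α^2*γ^2*d1*d2/2 = (d1:ℝ) * (α^2*γ^2*d2/2) := by ring
        _ < (2*((k:ℝ)*m)) * (α^2*γ^2*d2/2) := by
            exact mul_lt_mul_of_pos_right h2kmr (by positivity)
        _ = α^2*γ^2*((k:ℝ)*m)*d2 := by ring
    have hchain2 : α^2*γ^2*((k:ℝ)*m)*d2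
        ≤ (m:ℝ) * ((hammingDist c c' : ℝ) * (4*(α*γ)^2)) := by
      have h1 : (k:ℝ)*d2 ≤ 4*(hammingDist c c' : ℝ) := le_trans hD4r (by linarith)
      calc α^2*γ^2*((k:ℝ)*m)*d2 = (α^2*γ^2*m)*((k:ℝ)*d2) := by ring
        _ ≤ (α^2*γ^2*m)*(4*(hammingDist c c':ℝ)) := by
            exact mul_le_mul_of_nonneg_left h1 (by positivity)
        _ = (m:ℝ) * ((hammingDist c c':ℝ) * (4*(α*γ)^2)) := by ring
    show frobeniusNorm (packMat α γ φ c - packMat α γ φ c') ^ 2 > α ^ 2 * γ ^ 2 * d1 * d2 / 2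
    rw [hfrob2]
    exact lt_of_lt_of_le (lt_of_lt_of_le hchain1 hchain2) hkey

end
end

section
/- For the probit link function f(x) = Φ(x/σ), where Φ is the standard Gaussian cumulative distribution function and σ > 0, and any α > 0: the flatness constant satisfies β_α ≤ π σ² e^{α²/(2σ²)} and the steepness constant satisfies L_α ≤ 8(α/σ + 1)/σ. -/
noncomputable section

/-- Steepness constant `L_a`. -/
def steepness (f : ℝ → ℝ) (a : ℝ) : ℝ :=
  sSup ((fun x => |deriv f x| / (f x * (1 - f x))) '' Set.Icc (-a) a)

/-- Flatness constant `β_a`. -/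
def flatness (f : ℝ → ℝ) (a : ℝ) : ℝ :=
  sSup ((fun x => f x * (1 - f x) / (deriv f x) ^ 2) '' Set.Icc (-a) a)

/-- Standard Gaussian cumulative distribution function
`Φ(t) = (1/√(2π)) ∫_{-∞}^t e^{-s²/2} ds`. -/
def stdGaussianCDF (t : ℝ) : ℝ :=
  (Real.sqrt (2 * Real.pi))⁻¹ * ∫ s in Set.Iic t, Real.exp (-s ^ 2 / 2)

open Real MeasureTheory Set

namespace ProbitAux

def g (s : ℝ) : ℝ := Real.exp (-s ^ 2 / 2)

lemma g_cont : Continuous g := by unfold g; fun_prop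

lemma g_pos (s : ℝ) : 0 < g s := Real.exp_pos _

lemma g_le_one (s : ℝ) : g s ≤ 1 := by
  unfold g; rw [Real.exp_le_one_iff]; nlinarith [sq_nonneg s]

lemma g_fun_eq : g = fun s => Real.exp (-(1/2) * s ^ 2) := by
  funext s; unfold g; ring_nf

lemma g_neg (s : ℝ) : g (-s) = g s := by unfold g; rw [neg_sq]

lemma g_int : Integrable g := by
  rw [g_fun_eq]; exact integrable_exp_neg_mul_sq (by norm_num)

def S : ℝ := Real.sqrt (2 * Real.pi)

lemma S_pos : 0 < S := Real.sqrt_pos.mpr (by positivity)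

lemma S_sq : S * S = 2 * Real.pi := Real.mul_self_sqrt (by positivity)

lemma g_total : ∫ s, g s = S := by
  rw [g_fun_eq, integral_gaussian]
  unfold S
  rw [show Real.pi / (1/2) = 2 * Real.pi by ring]

lemma g_Ioi : ∫ s in Ioi (0:ℝ), g s = S / 2 := by
  rw [g_fun_eq, integral_gaussian_Ioi]
  unfold S
  rw [show Real.pi / (1/2) = 2 * Real.pi by ring]

def I (t : ℝ) : ℝ := ∫ s in Iic t, g s

def J (t : ℝ) : ℝ := ∫ s in Ioi t, g s

lemma I_add_J (t : ℝ) : I t + J t = S := by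
  rw [I, J, intervalIntegral.integral_Iic_add_Ioi g_int.integrableOn g_int.integrableOn, g_total]

lemma I_eq_J_neg (t : ℝ) : I t = J (-t) := by
  rw [I, J]
  rw [show (∫ s in Ioi (-t), g s) = ∫ s in Ioi (-t), g (-s) by simp_rw [g_neg]]
  rw [integral_comp_neg_Ioi, neg_neg]

lemma J_pos (t : ℝ) : 0 < J t := by
  have h1 : (0:ℝ) < ∫ s in t..(t+1), g s :=
    intervalIntegral.intervalIntegral_pos_of_pos (g_int.intervalIntegrable)
      g_pos (by linarith)
  have h2 : (∫ s in t..(t+1), g s) ≤ J t := by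
    rw [intervalIntegral.integral_of_le (by linarith : t ≤ t + 1)]
    exact setIntegral_mono_set g_int.integrableOn
      (Filter.Eventually.of_forall fun x => (g_pos x).le)
      (HasSubset.Subset.eventuallyLE Ioc_subset_Ioi_self)
  linarith

lemma I_pos (t : ℝ) : 0 < I t := by rw [I_eq_J_neg]; exact J_pos _

lemma I_lt_S (t : ℝ) : I t < S := by
  have := I_add_J t; have := J_pos t; linarith

lemma J_lt_S (t : ℝ) : J t < S := by
  have := I_add_J t; have := I_pos t; linarith

lemma J_eq_shift (t : ℝ) : J t = ∫ u in Ioi (0:ℝ), g (u + t) := by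
  have A : MeasurableEmbedding (fun x : ℝ => x + t) :=
    (Homeomorph.addRight t).isClosedEmbedding.measurableEmbedding
  have hmap : Measure.map (fun x : ℝ => x + t) volume = volume :=
    Measure.IsAddRightInvariant.map_add_right_eq_self (μ := volume) t
  have hpre : (fun x : ℝ => x + t) ⁻¹' Ioi t = Ioi 0 := by ext x; simp
  rw [J, ← hmap, A.setIntegral_map, hpre, hmap]

lemma J_le (t : ℝ) (ht : 0 ≤ t) : J t ≤ S / 2 * g t := by
  rw [J_eq_shift]
  have h1 : (∫ u in Ioi (0:ℝ), g (u + t)) ≤ ∫ u in Ioi (0:ℝ), g t * g u := by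
    apply setIntegral_mono_on
    · exact (g_int.comp_add_right t).integrableOn
    · exact (g_int.const_mul _).integrableOn
    · exact measurableSet_Ioi
    · intro u hu
      have hu' : 0 ≤ u := le_of_lt hu
      unfold g
      rw [← Real.exp_add]
      apply Real.exp_le_exp.mpr
      nlinarith [mul_nonneg hu' ht]
  rw [integral_const_mul, g_Ioi] at h1
  linarith [h1]

lemma J_ge (t : ℝ) (ht : 0 ≤ t) : g t / (4 * (t + 1)) ≤ J t := by
  set δ : ℝ := 1 / (2 * (t + 1)) with hδ
  have ht1 : (1:ℝ) ≤ t + 1 := by linarith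
  have hδpos : 0 < δ := by positivity
  have hδle : δ ≤ 1/2 := by
    rw [hδ, div_le_div_iff₀ (by positivity) (by norm_num)]; linarith
  have hδt : δ * (2 * (t + 1)) = 1 := by
    rw [hδ]; field_simp
  have h2 : (∫ s in t..(t+δ), g s) ≤ J t := by
    rw [intervalIntegral.integral_of_le (by linarith : t ≤ t + δ)]
    exact setIntegral_mono_set g_int.integrableOn
      (Filter.Eventually.of_forall fun x => (g_pos x).le)
      (HasSubset.Subset.eventuallyLE Ioc_subset_Ioi_self)
  have h3 : δ * g (t + δ) ≤ ∫ s in t..(t+δ), g s := by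
    have hm := intervalIntegral.integral_mono_on (μ := volume)
      (f := fun _ => g (t + δ)) (g := g) (by linarith : t ≤ t + δ)
      (intervalIntegrable_const) (g_int.intervalIntegrable)
      (fun s hs => by
        unfold g
        apply Real.exp_le_exp.mpr
        rcases hs with ⟨hs1, hs2⟩
        nlinarith)
    simpa [mul_comm] using hm
  have hexp : g t * (1/2) ≤ g (t + δ) := by
    have hgt : Real.exp (-(5/8)) * g t ≤ g (t + δ) := by
      unfold g
      rw [← Real.exp_add]
      apply Real.exp_le_exp.mpr
      nlinarith [hδt, hδle, hδpos.le, ht]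
    have he : (1/2 : ℝ) ≤ Real.exp (-(5/8)) := by
      rw [Real.exp_neg]
      rw [show (1/2 : ℝ) = 2⁻¹ by norm_num]
      apply inv_anti₀ (Real.exp_pos _)
      have h58 : (5/8 : ℝ) < Real.log 2 := by
        have := Real.log_two_gt_d9; linarith
      calc Real.exp (5/8) ≤ Real.exp (Real.log 2) := Real.exp_le_exp.mpr h58.le
        _ = 2 := Real.exp_log (by norm_num)
    nlinarith [g_pos t]
  have h4 : g t / (4 * (t + 1)) ≤ δ * g (t + δ) := by
    have hne : (t + 1) ≠ 0 := by linarith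
    have : g t / (4 * (t+1)) = δ * (g t * (1/2)) := by
      rw [hδ]; field_simp; ring_nf; try exact Or.inl trivial
    rw [this]
    exact mul_le_mul_of_nonneg_left hexp hδpos.le
  linarith

lemma IJ_upper (t : ℝ) : I t * J t ≤ Real.pi * g t := by
  rcases le_total 0 t with ht | ht
  · calc I t * J t ≤ S * (S / 2 * g t) :=
        mul_le_mul (I_lt_S t).le (J_le t ht) (J_pos t).le S_pos.le
      _ = Real.pi * g t := by rw [show S * (S/2 * g t) = S * S / 2 * g t by ring, S_sq]; ring
  · have hI : I t ≤ S / 2 * g t := by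
      rw [I_eq_J_neg, ← g_neg t]
      exact J_le (-t) (by linarith)
    calc I t * J t ≤ (S / 2 * g t) * S :=
        mul_le_mul hI (J_lt_S t).le (J_pos t).le
          (by have := S_pos; have := g_pos t; nlinarith)
      _ = Real.pi * g t := by
        rw [show S / 2 * g t * S = S * S / 2 * g t by ring, S_sq]; ring

lemma IJ_lower (t : ℝ) : S * g t / (8 * (|t| + 1)) ≤ I t * J t := by
  rcases le_total 0 t with ht | ht
  · have hI : S / 2 ≤ I t := by
      have h1 : J t ≤ S / 2 := by
        have := J_le t ht
        nlinarith [g_le_one t, S_pos]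
      have := I_add_J t; linarith
    have hJ : g t / (4 * (t + 1)) ≤ J t := J_ge t ht
    rw [abs_of_nonneg ht]
    have hne : (t + 1) ≠ 0 := by linarith
    calc S * g t / (8 * (t + 1)) = (S / 2) * (g t / (4 * (t + 1))) := by
          field_simp; ring_nf; try exact Or.inl trivial
      _ ≤ I t * J t := mul_le_mul hI hJ
          (div_nonneg (g_pos t).le (by positivity)) (I_pos t).le
  · have hJ : S / 2 ≤ J t := by
      have h1 : I t ≤ S / 2 := by
        have := J_le (-t) (by linarith : (0:ℝ) ≤ -t)
        rw [g_neg] at this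
        rw [I_eq_J_neg]
        nlinarith [g_le_one t, S_pos]
      have := I_add_J t; linarith
    have hI : g t / (4 * (-t + 1)) ≤ I t := by
      rw [I_eq_J_neg, ← g_neg t]
      exact J_ge (-t) (by linarith)
    rw [abs_of_nonpos ht]
    have hne : (-t + 1) ≠ 0 := by linarith
    calc S * g t / (8 * (-t + 1)) = (g t / (4 * (-t + 1))) * (S / 2) := by
          field_simp; ring_nf; try exact Or.inl trivial
      _ ≤ I t * J t := mul_le_mul hI hJ
          (le_of_lt (by have := S_pos; linarith)) (I_pos t).le

lemma hasDeriv_cdf (t : ℝ) : HasDerivAt stdGaussianCDF (S⁻¹ * g t) t := by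
  have key : stdGaussianCDF = fun u => S⁻¹ * I 0 + S⁻¹ * ∫ s in (0:ℝ)..u, g s := by
    funext u
    show S⁻¹ * I u = S⁻¹ * I 0 + S⁻¹ * ∫ s in (0:ℝ)..u, g s
    have h : I u - I 0 = ∫ s in (0:ℝ)..u, g s :=
      intervalIntegral.integral_Iic_sub_Iic g_int.integrableOn g_int.integrableOn
    rw [← h]; ring
  rw [key]
  have h := intervalIntegral.integral_hasDerivAt_right
    (g_int.intervalIntegrable (a := 0) (b := t))
    (g_cont.aestronglyMeasurable.stronglyMeasurableAtFilter) g_cont.continuousAt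
  exact (h.const_mul S⁻¹).const_add _

lemma f_hasDeriv (σ : ℝ) (hσ : σ ≠ 0) (x : ℝ) :
    HasDerivAt (fun x => stdGaussianCDF (x / σ)) (S⁻¹ * g (x / σ) / σ) x := by
  have h1 : HasDerivAt (fun y : ℝ => y / σ) (1 / σ) x := by
    simpa using (hasDerivAt_id x).div_const σ
  have h2 := (hasDeriv_cdf (x / σ)).comp x h1
  rw [show S⁻¹ * g (x / σ) / σ = S⁻¹ * g (x / σ) * (1 / σ) by ring]
  exact h2

end ProbitAux

open ProbitAux

/-- For the probit link `f(x) = Φ(x/σ)` with `σ > 0` and any `α > 0`, the flatness constant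
satisfies `β_α ≤ π σ² e^{α²/(2σ²)}` and the steepness constant satisfies
`L_α ≤ 8 (α/σ + 1)/σ`. -/
theorem probit_steepness_flatness (σ α : ℝ) (hσ : 0 < σ) (hα : 0 < α) :
    flatness (fun x => stdGaussianCDF (x / σ)) α ≤
      Real.pi * σ ^ 2 * Real.exp (α ^ 2 / (2 * σ ^ 2)) ∧
    steepness (fun x => stdGaussianCDF (x / σ)) α ≤ 8 * (α / σ + 1) / σ := by
  have hσ' : σ ≠ 0 := ne_of_gt hσ
  constructor
  · apply Real.sSup_le
    · rintro y ⟨x, hx, rfl⟩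
      dsimp only
      set t := x / σ with htdef
      have hderiv : deriv (fun x => stdGaussianCDF (x / σ)) x = S⁻¹ * g t / σ :=
        (f_hasDeriv σ hσ' x).deriv
      have hf : stdGaussianCDF t = S⁻¹ * I t := rfl
      have h1f : 1 - stdGaussianCDF t = S⁻¹ * J t := by
        rw [hf]
        have h := I_add_J t
        field_simp [S_pos.ne']
        linarith
      rw [hderiv, h1f, hf]
      have hgt := g_pos t
      have hIt := I_pos t
      have hJt := J_pos t
      have key : (S⁻¹ * I t) * (S⁻¹ * J t) / (S⁻¹ * g t / σ) ^ 2
          = σ ^ 2 * (I t * J t) / (g t) ^ 2 := by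
        field_simp [S_pos.ne']
      rw [key]
      have hup := IJ_upper t
      have hstep : σ ^ 2 * (I t * J t) / (g t) ^ 2 ≤ Real.pi * σ ^ 2 / g t := by
        rw [div_le_div_iff₀ (by positivity) hgt]
        nlinarith [mul_le_mul_of_nonneg_left hup (by positivity : (0:ℝ) ≤ σ ^ 2 * g t)]
      have hfinal : Real.pi * σ ^ 2 / g t ≤ Real.pi * σ ^ 2 * Real.exp (α ^ 2 / (2 * σ ^ 2)) := by
        have hginv : (g t)⁻¹ = Real.exp (t ^ 2 / 2) := by
          show (Real.exp (-t ^ 2 / 2))⁻¹ = Real.exp (t ^ 2 / 2)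
          rw [← Real.exp_neg]
          congr 1
          ring
        rw [div_eq_mul_inv, hginv]
        apply mul_le_mul_of_nonneg_left _ (by positivity)
        apply Real.exp_le_exp.mpr
        have hx2 : x ^ 2 ≤ α ^ 2 := sq_le_sq' hx.1 hx.2
        rw [htdef, div_pow, div_le_div_iff₀ (by norm_num) (by positivity)]
        have hcan : x ^ 2 / σ ^ 2 * (2 * σ ^ 2) = x ^ 2 * 2 := by
          field_simp
        rw [hcan]
        linarith
      linarith
    · positivity
  · apply Real.sSup_le
    · rintro y ⟨x, hx, rfl⟩
      dsimp only
      set t := x / σ with htdef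
      have hderiv : deriv (fun x => stdGaussianCDF (x / σ)) x = S⁻¹ * g t / σ :=
        (f_hasDeriv σ hσ' x).deriv
      have hf : stdGaussianCDF t = S⁻¹ * I t := rfl
      have h1f : 1 - stdGaussianCDF t = S⁻¹ * J t := by
        rw [hf]
        have h := I_add_J t
        field_simp [S_pos.ne']
        linarith
      rw [hderiv, h1f, hf]
      have hgt := g_pos t
      have hIt := I_pos t
      have hJt := J_pos t
      have hS := S_pos
      have habs : |S⁻¹ * g t / σ| = S⁻¹ * g t / σ := by
        apply abs_of_pos
        apply div_pos _ hσ
        exact mul_pos (inv_pos.mpr hS) hgt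
      rw [habs]
      have e1 : (S⁻¹ * g t / σ) / ((S⁻¹ * I t) * (S⁻¹ * J t))
          = S * g t / (σ * (I t * J t)) := by
        field_simp [S_pos.ne']
      rw [e1]
      have hK := IJ_lower t
      have habst : |t| ≤ α / σ := by
        have hxa : |x| ≤ α := abs_le.mpr hx
        rw [htdef, abs_div, abs_of_pos hσ]
        gcongr
      have step1 : S * g t / (σ * (I t * J t)) ≤ 8 * (|t| + 1) / σ := by
        rw [div_le_div_iff₀ (by positivity) hσ]
        have hK' : S * g t ≤ I t * J t * (8 * (|t| + 1)) :=
          (div_le_iff₀ (by positivity)).mp hK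
        nlinarith [abs_nonneg t, mul_pos hIt hJt]
      have step2 : 8 * (|t| + 1) / σ ≤ 8 * (α / σ + 1) / σ := by
        gcongr
      linarith
    · positivity

end
end
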